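/- For any real-valued functions f, g on a set V and any x, y ∈ V, |∇_{xy}(f·e^{g/2})|² − (∇_{xy}f)·(∇_{xy}(f·e^g)) = f(x)·f(y)·|∇_{xy}(e^{g/2})|², where ∇_{xy}h = h(y) - h(x). -/
import Mathlib

theorem nabla_exp_identity {V : Type*} (f g : V → ℝ) (x y : V) :
    |f y * Real.exp (g y / 2) - f x * Real.exp (g x / 2)| ^ 2
      - (f y - f x) * (f y * Real.exp (g y) - f x * Real.exp (g x))
      = f x * f y * |Real.exp (g y / 2) - Real.exp (g x / 2)| ^ 2 := by
  have hx : Real.exp (g x) = Real.exp (g x / 2) ^ 2 := by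
    rw [← Real.exp_nat_mul]; ring_nf
  have hy : Real.exp (g y) = Real.exp (g y / 2) ^ 2 := by
    rw [← Real.exp_nat_mul]; ring_nf
  rw [sq_abs, sq_abs, hx, hy]; ring
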